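/- Define B(1,l) as the l^2 x l^2 block matrix with l x l blocks B_{ii} = I_l and B_{ij} = E_{ij} - E_{ji} for i != j, where E_{ij} are the standard l x l matrix units. Then B(1,l) is positive semidefinite and rank(B(1,l)) = l(l-1)/2 + 1. -/

import Mathlib

open Matrix

/-- The block matrix `B(1,l)` with diagonal blocks `I_l` and off-diagonal blocks
`E_{ij} - E_{ji}` (matrix units). -/
noncomputable def Bmat1 (l : ℕ) : Matrix (Fin l × Fin l) (Fin l × Fin l) ℝ :=
  Matrix.of fun p q =>
    (if p.1 = q.1 then (1 : Matrix (Fin l) (Fin l) ℝ)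
     else Matrix.single p.1 q.1 (1 : ℝ) - Matrix.single q.1 p.1 (1 : ℝ))
      p.2 q.2

/-- Auxiliary "square root" matrix: row `none` is the diagonal indicator vector,
row `some ⟨(i,j), _⟩` (with `i < j`) is `e_{(i,j)} - e_{(j,i)}`. -/
noncomputable def Bmat1Row (l : ℕ) :
    Matrix (Option {p : Fin l × Fin l // p.1 < p.2}) (Fin l × Fin l) ℝ :=
  fun s r => match s with
  | none => if r.1 = r.2 then 1 else 0
  | some s => (if s.val = r then 1 else 0) - (if Prod.swap s.val = r then 1 else 0)

lemma Bmat1_eq_row_mul (l : ℕ) : Bmat1 l = (Bmat1Row l)ᵀ * Bmat1Row l := by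
  ext ⟨i, a⟩ ⟨j, b⟩
  rw [mul_apply, Fintype.sum_option]
  simp only [Bmat1Row, transpose_apply]
  rw [← Finset.sum_subtype (Finset.univ.filter fun p : Fin l × Fin l => p.1 < p.2)
    (by simp) (fun p => ((if p = (i,a) then (1:ℝ) else 0) - (if Prod.swap p = (i,a) then 1 else 0))
      * ((if p = (j,b) then 1 else 0) - (if Prod.swap p = (j,b) then 1 else 0)))]
  simp only [Prod.swap_eq_iff_eq_swap, sub_mul, mul_sub, ite_mul, mul_ite, one_mul, mul_one,
    zero_mul, mul_zero, Finset.sum_sub_distrib, Finset.sum_ite_eq, Finset.sum_ite_eq',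
    Finset.mem_filter, Finset.mem_univ, true_and, Prod.swap_prod_mk]
  simp only [Bmat1, of_apply, Matrix.one_apply, Matrix.sub_apply, Matrix.single, Prod.mk.injEq]
  split_ifs <;> simp_all [Matrix.one_apply] <;> omega

lemma Bmat1Row_apply_none_ne {l : ℕ} (s : {p : Fin l × Fin l // p.1 < p.2})
    (r : Fin l × Fin l) (hr : r.1 = r.2) : Bmat1Row l (some s) r = 0 := by
  obtain ⟨⟨p, q⟩, hpq⟩ := s
  obtain ⟨r1, r2⟩ := r
  simp only at hr
  subst hr
  simp only [Bmat1Row, Prod.swap_prod_mk, Prod.mk.injEq]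
  have h1 : ¬(p = r1 ∧ q = r1) := by rintro ⟨rfl, rfl⟩; exact lt_irrefl _ hpq
  have h2 : ¬(q = r1 ∧ p = r1) := by rintro ⟨rfl, rfl⟩; exact lt_irrefl _ hpq
  rw [if_neg h1, if_neg h2, sub_zero]

lemma Bmat1Row_apply_some {l : ℕ} (s t : {p : Fin l × Fin l // p.1 < p.2}) :
    Bmat1Row l (some s) t.val = if s = t then 1 else 0 := by
  obtain ⟨⟨p, q⟩, hpq⟩ := s
  obtain ⟨⟨p', q'⟩, hpq'⟩ := t
  simp only [Bmat1Row, Prod.swap_prod_mk, Prod.mk.injEq, Subtype.mk.injEq]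
  have h2 : ¬(q = p' ∧ p = q') := by
    rintro ⟨rfl, rfl⟩; exact absurd hpq' (not_lt.mpr hpq.le)
  rw [if_neg h2, sub_zero]

lemma Bmat1Row_linearIndependent (l : ℕ) (hl : 1 ≤ l) : LinearIndependent ℝ (Bmat1Row l) := by
  apply Fintype.linearIndependent_iff.mpr
  intro g hg s
  match s with
  | none =>
    have h := congrFun hg (⟨0, hl⟩, ⟨0, hl⟩)
    rw [Finset.sum_apply] at h
    simp only [Pi.smul_apply, smul_eq_mul] at h
    rw [Fintype.sum_option] at h
    simp only [Pi.zero_apply] at h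
    rw [Finset.sum_eq_zero (fun s _ => by
      rw [Bmat1Row_apply_none_ne s (⟨0, hl⟩, ⟨0, hl⟩) rfl, mul_zero])] at h
    simpa [Bmat1Row] using h
  | some t =>
    have h := congrFun hg t.val
    rw [Finset.sum_apply] at h
    simp only [Pi.smul_apply, smul_eq_mul] at h
    rw [Fintype.sum_option] at h
    simp only [Pi.zero_apply] at h
    have hnone : Bmat1Row l none t.val = 0 := by
      simp only [Bmat1Row]
      rw [if_neg (ne_of_lt t.prop)]
    rw [hnone, mul_zero, zero_add] at h
    simp only [Bmat1Row_apply_some, mul_ite, mul_one, mul_zero] at h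
    rwa [Finset.sum_ite_eq' Finset.univ t (fun s => g (some s)), if_pos (Finset.mem_univ t)] at h

lemma card_lt_pairs (l : ℕ) :
    Fintype.card {p : Fin l × Fin l // p.1 < p.2} = l * (l - 1) / 2 := by
  rw [Fintype.card_subtype]
  rw [Finset.card_filter]
  rw [Fintype.sum_prod_type]
  rw [Finset.sum_comm]
  have : ∀ b : Fin l, (∑ a : Fin l, if a < b then 1 else 0) = (b : ℕ) := by
    intro b
    rw [← Finset.card_filter]
    rw [show Finset.filter (fun a => a < b) Finset.univ = Finset.Iio b by ext x; simp]
    simp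
  rw [Finset.sum_congr rfl (fun b _ => this b)]
  rw [Fin.sum_univ_eq_sum_range (fun k => k) l, Finset.sum_range_id]

/-- `B(1,l)` is positive semidefinite and has rank `l(l-1)/2 + 1`. -/
theorem Bmat1_posSemidef_and_rank (l : ℕ) (hl : 1 ≤ l) :
    (Bmat1 l).PosSemidef ∧ (Bmat1 l).rank = l * (l - 1) / 2 + 1 := by
  rw [Bmat1_eq_row_mul]
  constructor
  · have h := Matrix.posSemidef_conjTranspose_mul_self (Bmat1Row l)
    have : (Bmat1Row l)ᴴ = (Bmat1Row l)ᵀ := by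
      ext p q; simp [conjTranspose_apply]
    rwa [this] at h
  · rw [Matrix.rank_transpose_mul_self]
    rw [LinearIndependent.rank_matrix (M := Bmat1Row l) (Bmat1Row_linearIndependent l hl)]
    rw [Fintype.card_option, card_lt_pairs]
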